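/- Let 1 ≤ m ≤ n, let A be an m×n real matrix whose rows a_1^T, …, a_m^T are linearly independent, and let b ∈ ℝ^m. Define φ(x) := max_{1≤i≤m}(⟨a_i, x⟩ − b_i) and J_{A,b}(x) := {i : ⟨a_i, x⟩ − b_i = φ(x)}. Then { J_{A,b}(x) : x ∈ ℝ^n, φ(x) > 0 } = { J ⊆ {1,…,m} : J ≠ ∅ }; in particular, for every nonempty J ⊆ {1,…,m} there exists x̄ ∈ ℝ^n with φ(x̄) > 0 and J_{A,b}(x̄) = J. -/

import Mathlib

open scoped RealInnerProductSpace

theorem exists_inner_eq_aux (m n : ℕ)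
    (a : Fin m → EuclideanSpace ℝ (Fin n)) (ha : LinearIndependent ℝ a)
    (v : Fin m → ℝ) : ∃ x : EuclideanSpace ℝ (Fin n), ∀ i, ⟪a i, x⟫ = v i := by
  let T : EuclideanSpace ℝ (Fin n) →ₗ[ℝ] EuclideanSpace ℝ (Fin m) :=
    { toFun := fun x => WithLp.toLp 2 (fun i => ⟪a i, x⟫)
      map_add' := by intro x y; ext i; simp [inner_add_right]
      map_smul' := by intro c x; ext i; simp [inner_smul_right] }
  suffices h : Function.Surjective T by
    obtain ⟨x, hx⟩ := h (WithLp.toLp 2 v)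
    exact ⟨x, fun i => congrFun (congrArg WithLp.ofLp hx) i⟩
  rw [← LinearMap.range_eq_top]
  by_contra hne
  have hob : (LinearMap.range T)ᗮ ≠ ⊥ := by
    intro h0
    exact hne (Submodule.orthogonal_eq_bot_iff.mp h0)
  obtain ⟨c, hc, hc0⟩ := Submodule.exists_mem_ne_zero_of_ne_bot hob
  have key : ∀ x : EuclideanSpace ℝ (Fin n), ⟪(∑ i, c i • a i), x⟫ = 0 := by
    intro x
    have h1 : ⟪(T x : EuclideanSpace ℝ (Fin m)), c⟫ = 0 :=
      (Submodule.mem_orthogonal _ _).mp hc _ ⟨x, rfl⟩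
    have h2 : ⟪(T x : EuclideanSpace ℝ (Fin m)), c⟫ = ∑ i, ⟪a i, x⟫ * c i := by
      simp [PiLp.inner_apply, T, mul_comm]
    rw [sum_inner]
    simp only [real_inner_smul_left]
    rw [h2] at h1
    rw [← h1]
    exact Finset.sum_congr rfl fun i _ => mul_comm _ _
  have hz : (∑ i, c i • a i) = 0 := by
    have := key (∑ i, c i • a i)
    exact inner_self_eq_zero.mp this
  have := Fintype.linearIndependent_iff.mp ha c hz
  exact hc0 (by ext i; simpa using this i)

/-- if `1 ≤ m ≤ n` and the rows `a₁, …, a_m` of `A` are linearly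
independent, then `{ J_{A,b}(x) : φ(x) > 0 } = { J ⊆ {1,…,m} : J ≠ ∅ }`, where
`φ(x) = max_i (⟨a_i, x⟩ - b_i)` and `J_{A,b}(x)` is the active index set at `x`. -/
theorem stmt8 (m n : ℕ) (hm : 1 ≤ m) (hmn : m ≤ n)
    (a : Fin m → EuclideanSpace ℝ (Fin n)) (ha : LinearIndependent ℝ a)
    (b : Fin m → ℝ) :
    {J : Set (Fin m) | ∃ x : EuclideanSpace ℝ (Fin n),
        0 < (⨆ i, (⟪a i, x⟫ - b i)) ∧
        J = {i | ⟪a i, x⟫ - b i = ⨆ j, (⟪a j, x⟫ - b j)}} =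
      {J : Set (Fin m) | J.Nonempty} := by
  classical
  have hne : Nonempty (Fin m) := ⟨⟨0, hm⟩⟩
  ext J
  simp only [Set.mem_setOf_eq]
  constructor
  · rintro ⟨x, hx, rfl⟩
    obtain ⟨i, hi⟩ := Finite.exists_max (fun j => ⟪a j, x⟫ - b j)
    refine ⟨i, ?_⟩
    exact le_antisymm (le_ciSup (f := fun j => ⟪a j, x⟫ - b j) (Set.finite_range _).bddAbove i) (ciSup_le hi)
  · rintro ⟨j0, hj0⟩
    obtain ⟨x, hx⟩ := exists_inner_eq_aux m n a ha
      (fun i => b i + (if i ∈ J then 1 else 0))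
    have hf : ∀ i, ⟪a i, x⟫ - b i = (if i ∈ J then (1:ℝ) else 0) := by
      intro i; rw [hx i]; ring
    have hsup : (⨆ j, (⟪a j, x⟫ - b j)) = 1 := by
      apply le_antisymm
      · apply ciSup_le
        intro i; rw [hf i]; split <;> norm_num
      · calc (1:ℝ) = ⟪a j0, x⟫ - b j0 := by rw [hf j0, if_pos hj0]
          _ ≤ _ := le_ciSup (f := fun j => ⟪a j, x⟫ - b j) (Set.finite_range _).bddAbove j0
    refine ⟨x, by rw [hsup]; norm_num, ?_⟩
    ext i
    simp only [Set.mem_setOf_eq, hsup, hf i]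
    split <;> simp_all
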